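/- Let (L, R) be a functorial factorisation system on a category C such that for all morphisms h, k, the morphism L(k) has the left lifting property with respect to R(h). Then the pair (L-class, R-class), where a morphism g is in the left class iff there exists i with i ∘ g = L(g) and R(g) ∘ i = id, and f is in the right class iff there exists r with f ∘ r = R(f) and r ∘ L(f) = id, is a weak factorisation system on C extending (L, R). -/

import Mathlib

universe v u u₂

open CategoryTheory Limits Opposite

noncomputable section

/-- A small category with fewer than `κ` morphisms. -/
def CardSmallCat (K : Type v) [SmallCategory K] (κ : Cardinal.{v}) : Prop :=
  Cardinal.mk (Σ p : K × K, p.1 ⟶ p.2) < κ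

/-- `J` is `κ`-filtered: every `κ`-small diagram in `J` admits a cocone. -/
def IsCardFiltered (J : Type v) [SmallCategory J] (κ : Cardinal.{v}) : Prop :=
  ∀ (K : Type v) [SmallCategory K], CardSmallCat K κ → ∀ F : K ⥤ J, Nonempty (Cocone F)

/-- `A` is `κ`-presentable: `Hom(A,-)` preserves colimits of small `κ`-filtered diagrams. -/
def IsCardPresentable {C : Type u} [Category.{v} C] (κ : Cardinal.{v}) (A : C) : Prop :=
  ∀ (J : Type v) [SmallCategory J], IsCardFiltered J κ →
    Nonempty (PreservesColimitsOfShape J (coyoneda.obj (op A)))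

/-- `A` is `(κ, lam)`-presentable: `Hom(A,-)` preserves colimits of `lam`-small
`κ`-filtered diagrams. -/
def IsRelPresentable {C : Type u} [Category.{v} C] (κ lam : Cardinal.{v}) (A : C) : Prop :=
  ∀ (J : Type v) [SmallCategory J], CardSmallCat J lam → IsCardFiltered J κ →
    Nonempty (PreservesColimitsOfShape J (coyoneda.obj (op A)))

/-- `C` is a `κ`-accessible category. -/
def IsCardAccessible (C : Type u) [Category.{v} C] (κ : Cardinal.{v}) : Prop :=
  (∀ (J : Type v) [SmallCategory J], IsCardFiltered J κ → HasColimitsOfShape J C) ∧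
  ∃ G : Set C, Small.{v} G ∧ (∀ A ∈ G, IsCardPresentable κ A) ∧
    ∀ X : C, ∃ (J : Type v) (inst : SmallCategory J) (F : J ⥤ C) (c : Cocone F),
      IsCardFiltered J κ ∧ (∀ j, F.obj j ∈ G) ∧ Nonempty (IsColimit c) ∧ Nonempty (c.pt ≅ X)

/-- `F` preserves colimits of small `κ`-filtered diagrams. -/
def PreservesCardFiltered {C : Type u} [Category.{v} C] {D : Type u₂} [Category.{v} D]
    (F : C ⥤ D) (κ : Cardinal.{v}) : Prop :=
  ∀ (J : Type v) [SmallCategory J], IsCardFiltered J κ →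
    Nonempty (PreservesColimitsOfShape J F)

/-- `F` is a strongly `κ`-accessible functor. -/
def StronglyCardAccessible {C : Type u} [Category.{v} C] {D : Type u₂} [Category.{v} D]
    (F : C ⥤ D) (κ : Cardinal.{v}) : Prop :=
  IsCardAccessible C κ ∧ IsCardAccessible D κ ∧ PreservesCardFiltered F κ ∧
    ∀ X : C, IsCardPresentable κ X → IsCardPresentable κ (F.obj X)

/-- `κ ◁ lam`: `κ` is sharply less than `lam`. -/
def SharplyLess (κ lam : Cardinal.{u}) : Prop :=
  κ < lam ∧ ∀ X : Type u, Cardinal.mk X < lam →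
    ∃ S : Set {s : Set X // Cardinal.mk s < κ},
      Cardinal.mk S < lam ∧ ∀ t : {s : Set X // Cardinal.mk s < κ}, ∃ w ∈ S, t.1 ⊆ w.1


/-- A functorial factorisation system on `C`. -/
structure FFact (C : Type u) [Category.{v} C] where
  Z : Arrow C ⥤ C
  ι : Arrow.leftFunc ⟶ Z
  π : Z ⟶ Arrow.rightFunc
  fac : ∀ f : Arrow C, ι.app f ≫ π.app f = f.hom

/-- The left class associated to a functorial factorisation system. -/
def FFact.leftClass {C : Type u} [Category.{v} C] (D : FFact C) : MorphismProperty C :=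
  fun _ Y g => ∃ i : Y ⟶ D.Z.obj (Arrow.mk g),
    g ≫ i = D.ι.app (Arrow.mk g) ∧ i ≫ D.π.app (Arrow.mk g) = 𝟙 Y

/-- The right class associated to a functorial factorisation system. -/
def FFact.rightClass {C : Type u} [Category.{v} C] (D : FFact C) : MorphismProperty C :=
  fun X _ f => ∃ r : D.Z.obj (Arrow.mk f) ⟶ X,
    D.ι.app (Arrow.mk f) ≫ r = 𝟙 X ∧ r ≫ f = D.π.app (Arrow.mk f)

/-- `(L, R)` is a weak factorisation system. -/
structure IsWFS {M : Type u} [Category.{v} M] (L R : MorphismProperty M) : Prop where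
  fac : ∀ ⦃X Y : M⦄ (f : X ⟶ Y), ∃ (Z : M) (g : X ⟶ Z) (h : Z ⟶ Y), L g ∧ R h ∧ g ≫ h = f
  llp : ∀ ⦃X Y : M⦄ (f : X ⟶ Y),
    (L f ↔ ∀ ⦃A B : M⦄ (g : A ⟶ B), R g → HasLiftingProperty f g)
  rlp : ∀ ⦃X Y : M⦄ (f : X ⟶ Y),
    (R f ↔ ∀ ⦃A B : M⦄ (g : A ⟶ B), L g → HasLiftingProperty g f)


lemma FFact.left_lift_right {C : Type u} [Category.{v} C] (D : FFact C)
    (hlift : ∀ f g : Arrow C, HasLiftingProperty (D.ι.app g) (D.π.app f))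
    {X Y A B : C} {f : X ⟶ Y} {g : A ⟶ B}
    (hf : D.leftClass f) (hg : D.rightClass g) : HasLiftingProperty f g := by
  obtain ⟨i, hi1, hi2⟩ := hf
  obtain ⟨r, hr1, hr2⟩ := hg
  constructor
  intro u v sq
  have h := hlift (Arrow.mk g) (Arrow.mk f)
  have sq2 : CommSq (u ≫ D.ι.app (Arrow.mk g)) (D.ι.app (Arrow.mk f))
      (D.π.app (Arrow.mk g)) (D.π.app (Arrow.mk f) ≫ v) := ⟨by
    have h1 := D.fac (Arrow.mk g)
    have h2 := D.fac (Arrow.mk f)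
    simp only [Arrow.mk_hom] at h1 h2
    erw [Category.assoc, h1, ← Category.assoc, h2, sq.w]; exact rfl⟩
  obtain ⟨⟨⟨L, hL1, hL2⟩⟩⟩ := h.sq_hasLift sq2
  exact ⟨⟨⟨i ≫ L ≫ r, by
    erw [← Category.assoc, ← Category.assoc, hi1, hL1,
      Category.assoc, hr1, Category.comp_id], by
    simp only [Category.assoc, hr2, hL2]
    erw [hL2, ← Category.assoc, hi2, Category.id_comp]⟩⟩⟩

lemma FFact.left_mem {C : Type u} [Category.{v} C] (D : FFact C)
    (hlift : ∀ f g : Arrow C, HasLiftingProperty (D.ι.app g) (D.π.app f))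
    (f : Arrow C) : D.leftClass (D.ι.app f) := by
  have h := hlift (Arrow.mk (D.ι.app f)) f
  have sq : CommSq (D.ι.app (Arrow.mk (D.ι.app f))) (D.ι.app f)
      (D.π.app (Arrow.mk (D.ι.app f))) (𝟙 _) := ⟨by
    have h1 := D.fac (Arrow.mk (D.ι.app f))
    simp only [Arrow.mk_hom] at h1
    erw [h1, Category.comp_id]⟩
  obtain ⟨⟨⟨L, hL1, hL2⟩⟩⟩ := h.sq_hasLift sq
  exact ⟨L, hL1, by rw [hL2]⟩

lemma FFact.right_mem {C : Type u} [Category.{v} C] (D : FFact C)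
    (hlift : ∀ f g : Arrow C, HasLiftingProperty (D.ι.app g) (D.π.app f))
    (f : Arrow C) : D.rightClass (D.π.app f) := by
  have h := hlift f (Arrow.mk (D.π.app f))
  have sq : CommSq (𝟙 _) (D.ι.app (Arrow.mk (D.π.app f)))
      (D.π.app f) (D.π.app (Arrow.mk (D.π.app f))) := ⟨by
    have h1 := D.fac (Arrow.mk (D.π.app f))
    simp only [Arrow.mk_hom] at h1
    erw [h1, Category.id_comp]⟩
  obtain ⟨⟨⟨L, hL1, hL2⟩⟩⟩ := h.sq_hasLift sq
  exact ⟨L, hL1, hL2⟩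

/-- A functorial factorisation with the mutual lifting property induces a weak factorisation
system extending it. -/
theorem stmt17 {C : Type u} [Category.{v} C] (D : FFact C)
    (hlift : ∀ f g : Arrow C, HasLiftingProperty (D.ι.app g) (D.π.app f)) :
    IsWFS D.leftClass D.rightClass ∧
      ∀ f : Arrow C, D.leftClass (D.ι.app f) ∧ D.rightClass (D.π.app f) := by
  refine ⟨⟨?_, ?_, ?_⟩, fun f => ⟨D.left_mem hlift f, D.right_mem hlift f⟩⟩
  · intro X Y f
    refine ⟨D.Z.obj (Arrow.mk f), D.ι.app (Arrow.mk f), D.π.app (Arrow.mk f),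
      D.left_mem hlift _, D.right_mem hlift _, ?_⟩
    have := D.fac (Arrow.mk f)
    exact this
  · intro X Y f
    constructor
    · intro hf A B g hg
      exact D.left_lift_right hlift hf hg
    · intro h
      have hp := h _ (D.right_mem hlift (Arrow.mk f))
      have sq : CommSq (D.ι.app (Arrow.mk f)) f (D.π.app (Arrow.mk f)) (𝟙 Y) := ⟨by
        have h1 := D.fac (Arrow.mk f)
        simp only [Arrow.mk_hom] at h1
        erw [h1, Category.comp_id]⟩
      obtain ⟨⟨⟨L, hL1, hL2⟩⟩⟩ := hp.sq_hasLift sq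
      exact ⟨L, hL1, by rw [hL2]⟩
  · intro X Y f
    constructor
    · intro hf A B g hg
      exact D.left_lift_right hlift hg hf
    · intro h
      have hp := h _ (D.left_mem hlift (Arrow.mk f))
      have sq : CommSq (𝟙 X) (D.ι.app (Arrow.mk f)) f (D.π.app (Arrow.mk f)) := ⟨by
        have h1 := D.fac (Arrow.mk f)
        simp only [Arrow.mk_hom] at h1
        erw [h1, Category.id_comp]⟩
      obtain ⟨⟨⟨L, hL1, hL2⟩⟩⟩ := hp.sq_hasLift sq
      exact ⟨L, hL1, hL2⟩
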